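/- Let D ∈ ℂ^{n×n} be Hermitian positive definite and let A ∈ ℂ^{n×n} be Hermitian positive semidefinite with A ≠ 0. If 0 < ω < 2 / λ_max(D^{-1/2} A D^{-1/2}), where λ_max denotes the largest eigenvalue, then there exists a > 0 such that the matrix 2ω D^{-1} − ω² D^{-1} A D^{-1} − a I_n is positive semidefinite. -/

import Mathlib

open Matrix
open scoped ComplexOrder

namespace Matrix.PosSemidef

/-- The positive semidefinite square root of a positive semidefinite matrix
(removed from Mathlib; restored with its old definition). -/
noncomputable def sqrt {n 𝕜 : Type*} [Fintype n] [DecidableEq n] [RCLike 𝕜]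
    {A : Matrix n n 𝕜} (hA : A.PosSemidef) : Matrix n n 𝕜 :=
  hA.1.eigenvectorUnitary.1 * diagonal ((↑) ∘ (√·) ∘ hA.1.eigenvalues) *
  (star hA.1.eigenvectorUnitary : Matrix n n 𝕜)

end Matrix.PosSemidef

lemma psd_sqrt_mul_self {n : ℕ} {A : Matrix (Fin n) (Fin n) ℂ} (hA : A.PosSemidef) :
    PosSemidef.sqrt hA * PosSemidef.sqrt hA = A := by
  have hU : (star hA.1.eigenvectorUnitary : Matrix (Fin n) (Fin n) ℂ) *
      (hA.1.eigenvectorUnitary : Matrix (Fin n) (Fin n) ℂ) = 1 :=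
    Unitary.coe_star_mul_self _
  unfold PosSemidef.sqrt
  calc _ = (hA.1.eigenvectorUnitary : Matrix (Fin n) (Fin n) ℂ) *
        (diagonal (RCLike.ofReal ∘ (√·) ∘ hA.1.eigenvalues) *
          ((star hA.1.eigenvectorUnitary : Matrix (Fin n) (Fin n) ℂ) *
            (hA.1.eigenvectorUnitary : Matrix (Fin n) (Fin n) ℂ)) *
          diagonal (RCLike.ofReal ∘ (√·) ∘ hA.1.eigenvalues)) *
        (star hA.1.eigenvectorUnitary : Matrix (Fin n) (Fin n) ℂ) := by
          simp only [Matrix.mul_assoc]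
    _ = (hA.1.eigenvectorUnitary : Matrix (Fin n) (Fin n) ℂ) *
        diagonal (RCLike.ofReal ∘ hA.1.eigenvalues) *
        (star hA.1.eigenvectorUnitary : Matrix (Fin n) (Fin n) ℂ) := by
          have e : (fun i => (RCLike.ofReal ∘ (√·) ∘ hA.1.eigenvalues) i *
              (RCLike.ofReal ∘ (√·) ∘ hA.1.eigenvalues) i : Fin n → ℂ) =
              RCLike.ofReal ∘ hA.1.eigenvalues := by
            funext i
            simp only [Function.comp_apply]
            rw [← RCLike.ofReal_mul, Real.mul_self_sqrt (hA.eigenvalues_nonneg i)]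
          rw [hU, Matrix.mul_one, diagonal_mul_diagonal, e]
    _ = A := by
          conv_rhs => rw [hA.1.spectral_theorem]
          rw [Unitary.conjStarAlgAut_apply]

lemma psd_posSemidef_sqrt {n : ℕ} {A : Matrix (Fin n) (Fin n) ℂ} (hA : A.PosSemidef) :
    (PosSemidef.sqrt hA).PosSemidef := by
  unfold PosSemidef.sqrt
  rw [Matrix.star_eq_conjTranspose]
  exact (posSemidef_diagonal_iff.mpr fun i =>
    Complex.zero_le_real.mpr (Real.sqrt_nonneg _)).mul_mul_conjTranspose_same _

/-- A nonnegative real multiple of a PSD matrix is PSD. -/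
lemma psd_real_smul {n : ℕ} {X : Matrix (Fin n) (Fin n) ℂ} (hX : X.PosSemidef) {r : ℝ}
    (hr : 0 ≤ r) : ((r : ℂ) • X).PosSemidef := by
  constructor
  · unfold Matrix.IsHermitian
    rw [conjTranspose_smul, hX.1.eq, Complex.star_def, Complex.conj_ofReal]
  · intro x
    exact (hX.smul (Complex.zero_le_real.mpr hr)).2 x

/-- If all eigenvalues of a Hermitian matrix `H` are at most `c`, then `c•1 - H` is PSD. -/
lemma smul_one_sub_psd {n : ℕ} {H : Matrix (Fin n) (Fin n) ℂ} (hH : H.IsHermitian) {c : ℝ}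
    (h : ∀ i, hH.eigenvalues i ≤ c) : ((c : ℂ) • 1 - H).PosSemidef := by
  have hU : (hH.eigenvectorUnitary : Matrix (Fin n) (Fin n) ℂ) *
      (star hH.eigenvectorUnitary : Matrix (Fin n) (Fin n) ℂ) = 1 :=
    Matrix.mem_unitaryGroup_iff.mp hH.eigenvectorUnitary.2
  have hd : diagonal (fun i => ((c - hH.eigenvalues i : ℝ) : ℂ)) =
      (c : ℂ) • (1 : Matrix (Fin n) (Fin n) ℂ) - diagonal (RCLike.ofReal ∘ hH.eigenvalues) := by
    rw [smul_one_eq_diagonal, diagonal_sub]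
    funext i
    simp [Function.comp]
  have key : (c : ℂ) • (1 : Matrix (Fin n) (Fin n) ℂ) - H =
      (hH.eigenvectorUnitary : Matrix (Fin n) (Fin n) ℂ) *
        diagonal (fun i => ((c - hH.eigenvalues i : ℝ) : ℂ)) *
        (star hH.eigenvectorUnitary : Matrix (Fin n) (Fin n) ℂ) := by
    rw [hd, Matrix.mul_sub, Matrix.sub_mul]
    conv_lhs => rw [hH.spectral_theorem, Unitary.conjStarAlgAut_apply]
    congr 1
    rw [mul_smul_comm, Matrix.mul_one, smul_mul_assoc, hU]
  rw [key, Matrix.star_eq_conjTranspose]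
  exact (posSemidef_diagonal_iff.mpr fun i =>
    Complex.zero_le_real.mpr (sub_nonneg.mpr (h i))).mul_mul_conjTranspose_same _

/-- If `D` is HPD, `A` is HPSD and nonzero, and `0 < ω < 2/λ_max(D^{-1/2} A D^{-1/2})`,
then there exists `a > 0` with `2ω D⁻¹ - ω² D⁻¹ A D⁻¹ - a·I` positive semidefinite. -/
theorem stmt6 {n : ℕ} (D A : Matrix (Fin n) (Fin n) ℂ)
    (hD : D.PosDef) (hA : A.PosSemidef) (hA0 : A ≠ 0)
    (hM : ((PosSemidef.sqrt hD.posSemidef)⁻¹ * A * (PosSemidef.sqrt hD.posSemidef)⁻¹).IsHermitian)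
    (ω : ℝ) (hω0 : 0 < ω) (hω2 : ω < 2 / ⨆ i, hM.eigenvalues i) :
    ∃ a : ℝ, 0 < a ∧
      (((2 * ω : ℝ) : ℂ) • D⁻¹ - ((ω ^ 2 : ℝ) : ℂ) • (D⁻¹ * A * D⁻¹) -
        (a : ℂ) • (1 : Matrix (Fin n) (Fin n) ℂ)).PosSemidef := by
  classical
  have hS : (PosSemidef.sqrt hD.posSemidef) * (PosSemidef.sqrt hD.posSemidef) = D := psd_sqrt_mul_self hD.posSemidef
  have hSherm : (PosSemidef.sqrt hD.posSemidef).IsHermitian := (psd_posSemidef_sqrt hD.posSemidef).1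
  have hdetS : IsUnit (PosSemidef.sqrt hD.posSemidef).det := by
    rw [isUnit_iff_ne_zero]
    intro h
    have : D.det = 0 := by rw [← hS, Matrix.det_mul, h, mul_zero]
    exact hD.det_pos.ne' this
  have hSinv : (PosSemidef.sqrt hD.posSemidef)⁻¹ * (PosSemidef.sqrt hD.posSemidef) = 1 :=
    Matrix.nonsing_inv_mul _ hdetS
  have hSSinv : (PosSemidef.sqrt hD.posSemidef) * (PosSemidef.sqrt hD.posSemidef)⁻¹ = 1 :=
    Matrix.mul_nonsing_inv _ hdetS
  have hSinvherm : ((PosSemidef.sqrt hD.posSemidef)⁻¹).IsHermitian := hSherm.inv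
  have hDS : D * (PosSemidef.sqrt hD.posSemidef)⁻¹ = (PosSemidef.sqrt hD.posSemidef) := by
    have h1 : (PosSemidef.sqrt hD.posSemidef) * (PosSemidef.sqrt hD.posSemidef) * (PosSemidef.sqrt hD.posSemidef)⁻¹ =
        (PosSemidef.sqrt hD.posSemidef) := by
      rw [Matrix.mul_assoc, hSSinv, Matrix.mul_one]
    rwa [hS] at h1
  have hDinv : D⁻¹ = (PosSemidef.sqrt hD.posSemidef)⁻¹ * (PosSemidef.sqrt hD.posSemidef)⁻¹ := by
    refine Matrix.inv_eq_right_inv ?_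
    rw [← Matrix.mul_assoc, hDS, hSSinv]
  have hMpsd : ((PosSemidef.sqrt hD.posSemidef)⁻¹ * A * (PosSemidef.sqrt hD.posSemidef)⁻¹).PosSemidef := by
    have := hA.conjTranspose_mul_mul_same (PosSemidef.sqrt hD.posSemidef)⁻¹
    rwa [hSinvherm.eq] at this
  set L := ⨆ i, hM.eigenvalues i with hLdef
  have h2L : 0 < 2 / L := hω0.trans hω2
  have hL : 0 < L := by
    rcases div_pos_iff.mp h2L with ⟨_, h⟩ | ⟨h, _⟩
    · exact h
    · norm_num at h
  have hωL : ω * L < 2 := (lt_div_iff₀ hL).mp hω2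
  have hLle : ∀ i, hM.eigenvalues i ≤ L := fun i =>
    le_ciSup (Set.Finite.bddAbove (Set.finite_range _)) i
  have hMsub : ((L : ℂ) • 1 - (PosSemidef.sqrt hD.posSemidef)⁻¹ * A * (PosSemidef.sqrt hD.posSemidef)⁻¹).PosSemidef :=
    smul_one_sub_psd hM hLle
  set c := (⨆ i, hD.1.eigenvalues i) + 1 with hcdef
  have hne : Nonempty (Fin n) := by
    rcases isEmpty_or_nonempty (Fin n) with h | h
    · exact absurd (by ext i j; exact isEmptyElim i : A = 0) hA0
    · exact h
  obtain ⟨i0⟩ := hne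
  have hc : 0 < c := by
    have h1 : 0 < hD.1.eigenvalues i0 := hD.eigenvalues_pos i0
    have h2 : hD.1.eigenvalues i0 ≤ ⨆ i, hD.1.eigenvalues i :=
      le_ciSup (Set.Finite.bddAbove (Set.finite_range _)) i0
    simp only [hcdef]; linarith
  have hDle : ∀ i, hD.1.eigenvalues i ≤ c := fun i => by
    have := le_ciSup (Set.Finite.bddAbove (Set.finite_range (hD.1.eigenvalues))) i
    simp only [hcdef]; linarith
  have hDsub : ((c : ℂ) • 1 - D).PosSemidef := smul_one_sub_psd hD.1 hDle
  set ε := ω * (2 - ω * L) with hεdef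
  have hε : 0 < ε := mul_pos hω0 (by linarith)
  refine ⟨ε / c, div_pos hε hc, ?_⟩
  set a := ε / c with hadef
  have hac : a * c = ε := div_mul_cancel₀ ε hc.ne'
  have hW : (((ω ^ 2 : ℝ) : ℂ) • ((L : ℂ) • 1 - (PosSemidef.sqrt hD.posSemidef)⁻¹ * A * (PosSemidef.sqrt hD.posSemidef)⁻¹)
      + ((a : ℝ) : ℂ) • ((c : ℂ) • 1 - D)).PosSemidef :=
    (psd_real_smul hMsub (sq_nonneg ω)).add (psd_real_smul hDsub (div_pos hε hc).le)
  have e1 : (PosSemidef.sqrt hD.posSemidef)⁻¹ * ((L : ℂ) • 1 -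
        (PosSemidef.sqrt hD.posSemidef)⁻¹ * A * (PosSemidef.sqrt hD.posSemidef)⁻¹) * (PosSemidef.sqrt hD.posSemidef)⁻¹
      = (L : ℂ) • D⁻¹ - D⁻¹ * A * D⁻¹ := by
    rw [Matrix.mul_sub, Matrix.sub_mul, mul_smul_comm, Matrix.mul_one, smul_mul_assoc, hDinv]
    simp only [Matrix.mul_assoc]
  have eD : (PosSemidef.sqrt hD.posSemidef)⁻¹ * D * (PosSemidef.sqrt hD.posSemidef)⁻¹ = 1 := by
    rw [Matrix.mul_assoc, hDS, hSinv]
  have e2 : (PosSemidef.sqrt hD.posSemidef)⁻¹ * ((c : ℂ) • 1 - D) * (PosSemidef.sqrt hD.posSemidef)⁻¹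
      = (c : ℂ) • D⁻¹ - 1 := by
    rw [Matrix.mul_sub, Matrix.sub_mul, mul_smul_comm, Matrix.mul_one, smul_mul_assoc, hDinv, eD]
  have hsc : ((2 * ω : ℝ) : ℂ) = ((ω ^ 2 : ℝ) : ℂ) * (L : ℂ) + (a : ℂ) * (c : ℂ) := by
    push_cast
    rw [← Complex.ofReal_mul, hac]
    push_cast [hεdef]
    ring
  have key : ((2 * ω : ℝ) : ℂ) • D⁻¹ - ((ω ^ 2 : ℝ) : ℂ) • (D⁻¹ * A * D⁻¹) -
      (a : ℂ) • (1 : Matrix (Fin n) (Fin n) ℂ) =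
      (PosSemidef.sqrt hD.posSemidef)⁻¹ *
        (((ω ^ 2 : ℝ) : ℂ) • ((L : ℂ) • 1 - (PosSemidef.sqrt hD.posSemidef)⁻¹ * A * (PosSemidef.sqrt hD.posSemidef)⁻¹)
          + ((a : ℝ) : ℂ) • ((c : ℂ) • 1 - D)) * (PosSemidef.sqrt hD.posSemidef)⁻¹ := by
    rw [Matrix.mul_add, Matrix.add_mul, mul_smul_comm, smul_mul_assoc, mul_smul_comm,
      smul_mul_assoc, e1, e2, smul_sub, smul_sub, smul_smul, smul_smul, hsc, add_smul]
    module
  rw [key]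
  have := hW.mul_mul_conjTranspose_same (PosSemidef.sqrt hD.posSemidef)⁻¹
  rwa [hSinvherm.eq] at this
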